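/- The number of integer solutions (a,b,c) of a² + b² = c² with c ≠ 0 and |a|, |b|, |c| ≤ N is at most k₁ · N · (log N + 1) for some absolute constant k₁ and all N ≥ 2. -/

import Mathlib

set_option maxHeartbeats 1000000

lemma sq_split {u v b : ℕ} (hu : 0 < u) (h : u * v = b ^ 2) :
    ∃ s t : ℕ, u = Nat.gcd u v * s ^ 2 ∧ v = Nat.gcd u v * t ^ 2 := by
  set g := Nat.gcd u v with hg
  have hg0 : 0 < g := Nat.gcd_pos_of_pos_left _ hu
  have hgu : g ∣ u := Nat.gcd_dvd_left u v
  have hgv : g ∣ v := Nat.gcd_dvd_right u v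
  have hcop : Nat.Coprime (u / g) (v / g) := Nat.coprime_div_gcd_div_gcd hg0
  have hu' : g * (u / g) = u := Nat.mul_div_cancel' hgu
  have hv' : g * (v / g) = v := Nat.mul_div_cancel' hgv
  have hb2 : g ^ 2 * (u / g * (v / g)) = b ^ 2 := by
    calc g ^ 2 * (u / g * (v / g)) = (g * (u / g)) * (g * (v / g)) := by ring
    _ = u * v := by rw [hu', hv']
    _ = b ^ 2 := h
  have hgb : g ∣ b := by
    have h2 : g ^ 2 ∣ b ^ 2 := ⟨_, hb2.symm⟩
    exact (Nat.pow_dvd_pow_iff (by norm_num)).1 h2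
  obtain ⟨e, rfl⟩ := hgb
  have he : u / g * (v / g) = e ^ 2 := by
    rw [mul_pow] at hb2
    exact Nat.eq_of_mul_eq_mul_left (pow_pos hg0 2) hb2
  obtain ⟨s, hs⟩ := exists_eq_pow_of_mul_eq_pow
    (show IsUnit (gcd (u / g) (v / g)) by rw [Nat.isUnit_iff]; exact hcop) he
  obtain ⟨t, ht⟩ := exists_eq_pow_of_mul_eq_pow
    (show IsUnit (gcd (v / g) (u / g)) by rw [Nat.isUnit_iff]; exact hcop.symm)
    (by rw [mul_comm] at he; exact he)
  exact ⟨s, t, by rw [← hu', hs], by rw [← hv', ht]⟩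

lemma int_sq_eq {x y : ℤ} (h : x ^ 2 = y ^ 2) : x = y ∨ x = -y := by
  have h2 : (x - y) * (x + y) = 0 := by linear_combination h
  rcases mul_eq_zero.1 h2 with h3 | h3
  · left; omega
  · right; omega

theorem stmt_5 :
    ∃ k₁ : ℝ, ∀ N : ℕ, 2 ≤ N →
      ((((Finset.Icc (-(N : ℤ)) N) ×ˢ (Finset.Icc (-(N : ℤ)) N) ×ˢ
          (Finset.Icc (-(N : ℤ)) N)).filter
          (fun t => t.1 ^ 2 + t.2.1 ^ 2 = t.2.2 ^ 2 ∧ t.2.2 ≠ 0)).card : ℝ) ≤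
        k₁ * N * (Real.log N + 1) := by
  refine ⟨52, fun N hN => ?_⟩
  set S := (((Finset.Icc (-(N : ℤ)) N) ×ˢ (Finset.Icc (-(N : ℤ)) N) ×ˢ
      (Finset.Icc (-(N : ℤ)) N)).filter
      (fun t => t.1 ^ 2 + t.2.1 ^ 2 = t.2.2 ^ 2 ∧ t.2.2 ≠ 0)) with hS
  set T := ((Finset.Icc 1 N) ×ˢ (Finset.Icc 1 N) ×ˢ (Finset.Icc 1 N)).filter
      (fun p : ℕ × ℕ × ℕ => p.1 ^ 2 + p.2.1 ^ 2 = p.2.2 ^ 2) with hT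
  set K : ℕ → ℕ := fun d => Nat.sqrt (2 * N / d) with hK
  set V := (Finset.Icc 1 (2 * N)).biUnion
      (fun d => {d} ×ˢ ((Finset.Icc 1 (K d)) ×ˢ (Finset.Icc 1 (K d)))) with hV
  -- membership unpacking for S
  have memS : ∀ t : ℤ × ℤ × ℤ, t ∈ S →
      (-(N:ℤ) ≤ t.1 ∧ t.1 ≤ N) ∧ (-(N:ℤ) ≤ t.2.1 ∧ t.2.1 ≤ N) ∧
      (-(N:ℤ) ≤ t.2.2 ∧ t.2.2 ≤ N) ∧ t.1 ^ 2 + t.2.1 ^ 2 = t.2.2 ^ 2 ∧ t.2.2 ≠ 0 := by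
    intro t ht
    rw [hS, Finset.mem_filter, Finset.mem_product, Finset.mem_product,
      Finset.mem_Icc, Finset.mem_Icc, Finset.mem_Icc] at ht
    tauto
  -- Step 1: split S
  have hsplit := Finset.card_filter_add_card_filter_not
    (s := S) (p := fun t : ℤ × ℤ × ℤ => t.1 ≠ 0 ∧ t.2.1 ≠ 0)
  -- Step 2: degenerate part
  have hdeg : (S.filter (fun t : ℤ × ℤ × ℤ => ¬(t.1 ≠ 0 ∧ t.2.1 ≠ 0))).card ≤
      8 * (2 * N + 1) := by
    have := Finset.card_le_card_of_injOn
      (f := fun t : ℤ × ℤ × ℤ => ((decide (t.1 = 0), decide (t.1 = t.2.2),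
        decide (t.2.1 = t.2.2)), t.2.2))
      (s := S.filter (fun t : ℤ × ℤ × ℤ => ¬(t.1 ≠ 0 ∧ t.2.1 ≠ 0)))
      (t := (Finset.univ : Finset (Bool × Bool × Bool)) ×ˢ Finset.Icc (-(N:ℤ)) N)
      ?_ ?_
    · refine this.trans ?_
      rw [Finset.card_product, Finset.card_univ]
      simp [Int.card_Icc]
      omega
    · intro t ht
      have h1 := memS t (Finset.mem_filter.1 ht).1
      simp only [Finset.mem_coe, Finset.mem_product, Finset.mem_univ, Finset.mem_Icc, true_and]
      exact ⟨h1.2.2.1.1, h1.2.2.1.2⟩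
    · intro t ht t' ht' hft
      simp only [Finset.coe_filter, Set.mem_setOf_eq] at ht ht'
      have h1 := memS t ht.1
      have h1' := memS t' ht'.1
      have hd := ht.2
      have hd' := ht'.2
      simp only [Prod.mk.injEq, decide_eq_decide] at hft
      obtain ⟨⟨f1, f2, f3⟩, f4⟩ := hft
      obtain ⟨_, _, _, heq, hc0⟩ := h1
      obtain ⟨_, _, _, heq', hc0'⟩ := h1'
      have hab : t.1 = 0 ∨ t.2.1 = 0 := by
        by_contra hcon
        push_neg at hcon
        exact hd ⟨hcon.1, hcon.2⟩
      have hext : t.1 = t'.1 ∧ t.2.1 = t'.2.1 := by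
        rcases hab with h0 | h0
        · have h0' : t'.1 = 0 := f1.1 h0
          rw [h0, zero_pow (by norm_num)] at heq
          rw [h0', zero_pow (by norm_num)] at heq'
          have hb := int_sq_eq (by linarith [heq] : t.2.1 ^ 2 = t.2.2 ^ 2)
          have hb' := int_sq_eq (by linarith [heq'] : t'.2.1 ^ 2 = t'.2.2 ^ 2)
          constructor
          · rw [h0, h0']
          · rcases hb with hb | hb <;> rcases hb' with hb' | hb' <;>
              first
              | omega
              | (exfalso; rw [← f4] at hb'; omega)
              | (rw [← f4] at hb'; omega)
        · have hbz : t.2.1 = 0 := h0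
          have hbz' : t'.2.1 = 0 := by
            by_cases hz : t'.1 = 0
            · -- then t.1 = 0 too, and t.2.1 = 0 anyway; t'.2.1 from heq'?
              have : t.1 = 0 := f1.2 hz
              rw [this, zero_pow (by norm_num)] at heq
              rw [hz, zero_pow (by norm_num)] at heq'
              -- t.2.1 = 0 and t.2.1^2 = t.2.2^2 gives t.2.2 = 0, contradiction
              exfalso
              rw [hbz, zero_pow (by norm_num)] at heq
              have : t.2.2 = 0 := by nlinarith [sq_nonneg t.2.2]
              exact hc0 this
            · by_contra hcon
              exact hd' ⟨hz, hcon⟩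
          rw [hbz, zero_pow (by norm_num)] at heq
          rw [hbz', zero_pow (by norm_num)] at heq'
          have ha := int_sq_eq (by linarith [heq] : t.1 ^ 2 = t.2.2 ^ 2)
          have ha' := int_sq_eq (by linarith [heq'] : t'.1 ^ 2 = t'.2.2 ^ 2)
          constructor
          · rcases ha with hb | hb <;> rcases ha' with hb' | hb' <;>
              first
              | omega
              | (exfalso; rw [← f4] at hb'; omega)
              | (rw [← f4] at hb'; omega)
          · rw [hbz, hbz']
      exact Prod.ext hext.1 (Prod.ext hext.2 f4)
  -- Step 3: main part injects into signs × T
  have hmain : (S.filter (fun t : ℤ × ℤ × ℤ => t.1 ≠ 0 ∧ t.2.1 ≠ 0)).card ≤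
      8 * T.card := by
    have := Finset.card_le_card_of_injOn
      (f := fun t : ℤ × ℤ × ℤ => ((decide (0 < t.1), decide (0 < t.2.1),
        decide (0 < t.2.2)), (t.1.natAbs, t.2.1.natAbs, t.2.2.natAbs)))
      (s := S.filter (fun t : ℤ × ℤ × ℤ => t.1 ≠ 0 ∧ t.2.1 ≠ 0))
      (t := (Finset.univ : Finset (Bool × Bool × Bool)) ×ˢ T)
      ?_ ?_
    · refine this.trans ?_
      rw [Finset.card_product, Finset.card_univ]
      simp
    · intro t ht
      rw [Finset.mem_coe, Finset.mem_filter] at ht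
      obtain ⟨hb1, ha0, hb0⟩ := ht
      obtain ⟨⟨hx1, hx2⟩, ⟨hy1, hy2⟩, ⟨hz1, hz2⟩, heq, hc0⟩ := memS t hb1
      simp only [Finset.mem_coe, Finset.mem_product, Finset.mem_univ, Finset.mem_Icc, true_and, hT,
        Finset.mem_filter]
      refine ⟨⟨?_, ?_, ?_⟩, ?_⟩
      · omega
      · omega
      · omega
      · have hnat : (t.1 ^ 2).natAbs + (t.2.1 ^ 2).natAbs = (t.2.2 ^ 2).natAbs := by
          rw [← Int.natAbs_add_of_nonneg (sq_nonneg _) (sq_nonneg _), heq]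
        simpa [Int.natAbs_pow] using hnat
    · intro t ht t' ht' hft
      rw [Finset.coe_filter, Set.mem_setOf_eq] at ht ht'
      obtain ⟨hb1, ha0, hb0⟩ := ht
      obtain ⟨hb1', ha0', hb0'⟩ := ht'
      have hc0 := (memS t hb1).2.2.2.2
      have hc0' := (memS t' hb1').2.2.2.2
      simp only [Prod.mk.injEq, decide_eq_decide] at hft
      obtain ⟨⟨f1, f2, f3⟩, g1, g2, g3⟩ := hft
      refine Prod.ext ?_ (Prod.ext ?_ ?_)
      · omega
      · omega
      · omega
  -- Step 4: T injects into V
  have hTV : T.card ≤ V.card := by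
    classical
    set f : ℕ × ℕ × ℕ → ℕ × ℕ × ℕ := fun p =>
      (Nat.gcd (p.2.2 - p.1) (p.2.2 + p.1),
       Nat.sqrt ((p.2.2 - p.1) / Nat.gcd (p.2.2 - p.1) (p.2.2 + p.1)),
       Nat.sqrt ((p.2.2 + p.1) / Nat.gcd (p.2.2 - p.1) (p.2.2 + p.1))) with hf
    have spec : ∀ p ∈ T, p.1 < p.2.2 ∧
        (f p).1 * (f p).2.1 ^ 2 = p.2.2 - p.1 ∧
        (f p).1 * (f p).2.2 ^ 2 = p.2.2 + p.1 ∧ f p ∈ V := by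
      rintro ⟨a, b, c⟩ hp
      rw [hT, Finset.mem_filter, Finset.mem_product, Finset.mem_product,
        Finset.mem_Icc, Finset.mem_Icc, Finset.mem_Icc] at hp
      obtain ⟨⟨⟨ha1, ha2⟩, ⟨hb1, hb2⟩, hc1, hc2⟩, heq⟩ := hp
      simp only at heq ha1 ha2 hb1 hb2 hc1 hc2
      have hac : a < c := by nlinarith
      have heqz : (a : ℤ) ^ 2 + (b : ℤ) ^ 2 = (c : ℤ) ^ 2 := by exact_mod_cast heq
      have huv : (c - a) * (c + a) = b ^ 2 := by
        zify [hac.le]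
        linear_combination -heqz
      have hu0 : 0 < c - a := by omega
      have hv0 : 0 < c + a := by omega
      obtain ⟨s, t, hs, ht⟩ := sq_split hu0 huv
      set g := Nat.gcd (c - a) (c + a) with hg
      have hg0 : 0 < g := Nat.gcd_pos_of_pos_left _ hu0
      have e1 : (c - a) / g = s ^ 2 := by
        rw [hs, Nat.mul_div_cancel_left _ hg0]
      have e2 : (c + a) / g = t ^ 2 := by
        rw [ht, Nat.mul_div_cancel_left _ hg0]
      have hfp : f (a, b, c) = (g, s, t) := by
        simp only [hf]
        rw [← hg, e1, e2, Nat.sqrt_eq', Nat.sqrt_eq']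
      rw [hfp]
      have hs0 : 0 < s := by
        rcases Nat.eq_zero_or_pos s with h0 | h0
        · rw [h0] at hs; simp at hs; omega
        · exact h0
      have ht0 : 0 < t := by
        rcases Nat.eq_zero_or_pos t with h0 | h0
        · rw [h0] at ht; simp at ht; omega
        · exact h0
      have hgle : g ≤ 2 * N := by
        have := Nat.le_of_dvd hv0 (Nat.gcd_dvd_right (c - a) (c + a))
        omega
      have hsK : s ≤ K g := by
        rw [hK]
        rw [Nat.le_sqrt]
        rw [Nat.le_div_iff_mul_le hg0]
        have : g * s ^ 2 ≤ 2 * N := by omega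
        nlinarith
      have htK : t ≤ K g := by
        rw [hK]
        rw [Nat.le_sqrt]
        rw [Nat.le_div_iff_mul_le hg0]
        have : g * t ^ 2 ≤ 2 * N := by omega
        nlinarith
      refine ⟨hac, by simpa using hs.symm, by simpa using ht.symm, ?_⟩
      rw [hV, Finset.mem_biUnion]
      refine ⟨g, ?_, ?_⟩
      · rw [Finset.mem_Icc]; omega
      · simp only [Finset.mem_product, Finset.mem_singleton, Finset.mem_Icc]
        exact ⟨by trivial, ⟨hs0, hsK⟩, ⟨ht0, htK⟩⟩
    apply Finset.card_le_card_of_injOn f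
    · intro p hp; exact (spec p hp).2.2.2
    · intro p hp q hq hfpq
      obtain ⟨hac, hp1, hp2, _⟩ := spec p hp
      obtain ⟨hac', hq1, hq2, _⟩ := spec q hq
      rw [hfpq] at hp1 hp2
      have e1 : p.2.2 - p.1 = q.2.2 - q.1 := by rw [← hp1, ← hq1]
      have e2 : p.2.2 + p.1 = q.2.2 + q.1 := by rw [← hp2, ← hq2]
      have ea : p.1 = q.1 := by omega
      have ec : p.2.2 = q.2.2 := by omega
      -- recover b
      have hpT := hp
      have hqT := hq
      rw [Finset.mem_coe, hT, Finset.mem_filter] at hpT hqT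
      have eb : p.2.1 = q.2.1 := by
        have h1 : p.2.1 ^ 2 = q.2.1 ^ 2 := by
          have := hpT.2
          have := hqT.2
          nlinarith [hpT.2, hqT.2, ea, ec]
        exact Nat.pow_left_injective (by norm_num) h1
      exact Prod.ext ea (Prod.ext eb ec)
  -- Step 5: bound V.card in ℝ
  have hN0 : (0:ℝ) < N := by positivity
  have hVbound : (V.card : ℝ) ≤ 2 * N * (1 + Real.log (2 * N)) := by
    have h1 : (V.card : ℝ) ≤ ∑ d ∈ Finset.Icc 1 (2 * N),
        ((({d} : Finset ℕ) ×ˢ ((Finset.Icc 1 (K d)) ×ˢ (Finset.Icc 1 (K d)))).card : ℝ) := by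
      rw [hV]
      exact_mod_cast Finset.card_biUnion_le
    have h2 : ∀ d ∈ Finset.Icc 1 (2 * N),
        ((({d} : Finset ℕ) ×ˢ ((Finset.Icc 1 (K d)) ×ˢ (Finset.Icc 1 (K d)))).card : ℝ) ≤
        (2 * N : ℝ) / d := by
      intro d hd
      rw [Finset.mem_Icc] at hd
      have hcard : (({d} : Finset ℕ) ×ˢ ((Finset.Icc 1 (K d)) ×ˢ (Finset.Icc 1 (K d)))).card
          = K d * K d := by
        simp [Nat.card_Icc]
      rw [hcard]
      have h3 : (K d * K d : ℕ) ≤ 2 * N / d := by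
        rw [hK]
        exact Nat.sqrt_le _
      calc ((K d * K d : ℕ) : ℝ) ≤ ((2 * N / d : ℕ) : ℝ) := by exact_mod_cast h3
        _ ≤ (2 * N : ℝ) / d := by
            have := Nat.cast_div_le (α := ℝ) (m := 2 * N) (n := d)
            push_cast at this ⊢
            exact this
    have h4 : ∑ d ∈ Finset.Icc 1 (2 * N), (2 * N : ℝ) / d
        = 2 * N * ((harmonic (2 * N) : ℚ) : ℝ) := by
      rw [harmonic_eq_sum_Icc]
      push_cast
      rw [Finset.mul_sum]
      exact Finset.sum_congr rfl (fun d _ => by rw [div_eq_mul_inv])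
    calc (V.card : ℝ) ≤ ∑ d ∈ Finset.Icc 1 (2 * N), (2 * N : ℝ) / d :=
          h1.trans (Finset.sum_le_sum h2)
      _ = 2 * N * ((harmonic (2 * N) : ℚ) : ℝ) := h4
      _ ≤ 2 * N * (1 + Real.log (2 * N)) := by
          have := harmonic_le_one_add_log (2 * N)
          push_cast at this ⊢
          nlinarith
  -- Final assembly
  have hlog2 : Real.log 2 ≤ 1 := by
    have := Real.log_le_sub_one_of_pos (x := 2) (by norm_num)
    linarith
  have hlogN : 0 ≤ Real.log N := Real.log_nonneg (by exact_mod_cast (by omega : 1 ≤ N))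
  have hlog2N : Real.log (2 * (N:ℝ)) ≤ 1 + Real.log N := by
    rw [Real.log_mul (by norm_num) (ne_of_gt hN0)]
    linarith
  have hN2 : (2:ℝ) ≤ (N:ℝ) := by exact_mod_cast hN
  have h8 : (S.card : ℝ) ≤ 8 * (2 * (N:ℝ) + 1) + 8 * (V.card : ℝ) := by
    have hn : S.card ≤ 8 * (2 * N + 1) + 8 * V.card := by omega
    calc (S.card : ℝ) ≤ ((8 * (2 * N + 1) + 8 * V.card : ℕ) : ℝ) := by exact_mod_cast hn
      _ = 8 * (2 * (N:ℝ) + 1) + 8 * (V.card : ℝ) := by push_cast; ring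
  have hVb : (V.card : ℝ) ≤ 2 * (N:ℝ) * (2 + Real.log N) := by
    refine hVbound.trans ?_
    push_cast
    nlinarith
  linarith [mul_nonneg hN0.le hlogN]
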